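/- Let $n \geq 3$ and $2 \leq m \leq n-1$. Let $b_k(z_1,\ldots,z_n)$ be homogeneous of degree $k$ for $m+1 \leq k \leq 2m$, and set $f(t_0,\ldots,t_n) = t_0^{2m} + t_0^{m-1} b_{m+1}(t_1,\ldots,t_n) + t_0^{m-2} b_{m+2}(t_1,\ldots,t_n) + \cdots + b_{2m}(t_1,\ldots,t_n)$. If (i) the affine hypersurface $\{1 + b_{m+1}(t) + \cdots + b_{2m}(t) = 0\} \subset \mathbb{C}^n$ is smooth, and (ii) the projective hypersurface $\{b_{2m} = 0\} \subset \mathbb{P}^{n-1}$ is smooth, then the projective hypersurface $Y = \{f = 0\} \subset \mathbb{P}^n$ is smooth. -/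

import Mathlib

open MvPolynomial Finset

lemma auxEvalSmul {σ : Type*} [Fintype σ] {φ : MvPolynomial σ ℂ} {k : ℕ}
    (h : φ.IsHomogeneous k) (c : ℂ) (x : σ → ℂ) :
    eval (fun i => c * x i) φ = c ^ k * eval x φ := by
  rw [eval_eq', eval_eq', Finset.mul_sum]
  refine Finset.sum_congr rfl fun d hd => ?_
  have hdeg : ∑ i, d i = k := by
    have h1 : (Finsupp.weight 1) d = k := h (mem_support_iff.mp hd)
    rw [show (1 : σ → ℕ) = fun _ => 1 from rfl, ← Finsupp.degree_eq_weight_one] at h1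
    rw [← h1, Finsupp.degree_apply]
    exact (Finset.sum_subset (Finset.subset_univ _)
      (fun i _ hi => Finsupp.notMem_support_iff.mp hi)).symm
  simp_rw [mul_pow]
  rw [Finset.prod_mul_distrib, Finset.prod_pow_eq_pow_sum, hdeg]
  ring

lemma auxPderivHomog {σ : Type*} {φ : MvPolynomial σ ℂ} {k : ℕ}
    (h : φ.IsHomogeneous k) (i : σ) : (pderiv i φ).IsHomogeneous (k - 1) := by
  rw [← φ.support_sum_monomial_coeff, map_sum]
  apply IsHomogeneous.sum
  intro d hd
  rw [pderiv_monomial]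
  by_cases hdi : d i = 0
  · rw [hdi]
    simp only [Nat.cast_zero, mul_zero, map_zero]
    exact isHomogeneous_zero _ _ _
  · apply isHomogeneous_monomial
    have hdk : d.degree = k := by
      rw [Finsupp.degree_eq_weight_one]
      exact h (mem_support_iff.mp hd)
    have hle : Finsupp.single i 1 ≤ d := Finsupp.single_le_iff.mpr (by omega)
    have hsplit : (d - Finsupp.single i 1) + Finsupp.single i 1 = d :=
      tsub_add_cancel_of_le hle
    have hdeg1 : (Finsupp.single i (1 : ℕ)).degree = 1 := by
      exact Finsupp.degree_single i 1
    have := congrArg Finsupp.degree hsplit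
    rw [Finsupp.degree_eq_weight_one] at this hdk hdeg1 ⊢
    rw [map_add] at this
    omega

theorem stmt15 (n m : ℕ) (hn : 3 ≤ n) (hm : 2 ≤ m) (hmn : m ≤ n - 1)
    (b : ℕ → MvPolynomial (Fin n) ℂ)
    (hb : ∀ k ∈ Finset.Icc (m + 1) (2 * m), (b k).IsHomogeneous k)
    (hi : ∀ t : Fin n → ℂ,
      MvPolynomial.eval t (1 + ∑ k ∈ Finset.Icc (m + 1) (2 * m), b k) = 0 →
      ∃ i, MvPolynomial.eval t
        (MvPolynomial.pderiv i (1 + ∑ k ∈ Finset.Icc (m + 1) (2 * m), b k)) ≠ 0)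
    (hii : ∀ z : Fin n → ℂ, z ≠ 0 →
      ¬ (MvPolynomial.eval z (b (2 * m)) = 0 ∧
        ∀ i, MvPolynomial.eval z (MvPolynomial.pderiv i (b (2 * m))) = 0)) :
    let f : MvPolynomial (Fin (n + 1)) ℂ :=
      MvPolynomial.X 0 ^ (2 * m) + ∑ k ∈ Finset.Icc (m + 1) (2 * m),
        MvPolynomial.X 0 ^ (2 * m - k) * MvPolynomial.rename Fin.succ (b k)
    ∀ t : Fin (n + 1) → ℂ, t ≠ 0 →
      ¬ (MvPolynomial.eval t f = 0 ∧
        ∀ i, MvPolynomial.eval t (MvPolynomial.pderiv i f) = 0) := by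
  intro f t ht
  rintro ⟨hf, hd⟩
  set z : Fin n → ℂ := fun j => t j.succ with hz
  -- evaluation of f
  have hevalf : eval t f = t 0 ^ (2 * m)
      + ∑ k ∈ Icc (m + 1) (2 * m), t 0 ^ (2 * m - k) * eval z (b k) := by
    simp only [f, map_add, map_sum, map_mul, map_pow, eval_X, eval_rename]
    rfl
  -- evaluation of partial derivatives in the z-directions
  have hpd : ∀ j : Fin n, eval t (pderiv j.succ f)
      = ∑ k ∈ Icc (m + 1) (2 * m), t 0 ^ (2 * m - k) * eval z (pderiv j (b k)) := by
    intro j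
    have h0 : pderiv j.succ (X (0 : Fin (n + 1)) : MvPolynomial (Fin (n + 1)) ℂ) = 0 :=
      pderiv_X_of_ne (Fin.succ_ne_zero j).symm
    have hren : ∀ k, pderiv j.succ (rename Fin.succ (b k))
        = rename Fin.succ (pderiv j (b k)) :=
      fun k => pderiv_rename (Fin.succ_injective n) j (b k)
    simp only [f, map_add, map_sum, pderiv_mul, pderiv_pow, h0, mul_zero, zero_mul,
      add_zero, zero_add, hren, map_mul, map_pow, eval_X, eval_rename]
    rfl
  by_cases h0 : t 0 = 0
  · -- boundary case: use (ii)
    have hzne : z ≠ 0 := by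
      intro hz0
      apply ht
      funext i
      refine Fin.cases h0 (fun j => ?_) i
      exact congrFun hz0 j
    have hmem : 2 * m ∈ Icc (m + 1) (2 * m) := by
      simp only [mem_Icc]; omega
    have hsingle : ∀ (c : ℕ → ℂ),
        ∑ k ∈ Icc (m + 1) (2 * m), t 0 ^ (2 * m - k) * c k = c (2 * m) := by
      intro c
      rw [Finset.sum_eq_single_of_mem (2 * m) hmem]
      · simp
      · intro k hk hkne
        rw [mem_Icc] at hk
        rw [h0, zero_pow (by omega)]
        ring
    refine hii z hzne ⟨?_, fun i => ?_⟩
    · have := hevalf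
      rw [hf, hsingle (fun k => eval z (b k)), h0, zero_pow (by positivity), zero_add] at this
      exact this.symm
    · have := hpd i
      rw [hd i.succ, hsingle (fun k => eval z (pderiv i (b k)))] at this
      exact this.symm
  · -- interior case: use (i)
    set u : Fin n → ℂ := fun j => (t 0)⁻¹ * z j with hu
    have hzu : z = fun j => t 0 * u j := by
      funext j
      exact (mul_inv_cancel_left₀ h0 (z j)).symm
    have hscale : ∀ k ∈ Icc (m + 1) (2 * m), eval z (b k) = t 0 ^ k * eval u (b k) := by
      intro k hk
      rw [hzu]
      exact auxEvalSmul (hb k hk) _ _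
    have hg : eval u (1 + ∑ k ∈ Icc (m + 1) (2 * m), b k) = 0 := by
      have key : t 0 ^ (2 * m) * eval u (1 + ∑ k ∈ Icc (m + 1) (2 * m), b k)
          = eval t f := by
        rw [hevalf, map_add, map_one, map_sum, mul_add, mul_one, Finset.mul_sum]
        congr 1
        refine Finset.sum_congr rfl fun k hk => ?_
        rw [hscale k hk, mem_Icc] at *
        rw [← mul_assoc, ← pow_add]
        congr 2
        omega
      rw [hf] at key
      exact (mul_eq_zero.mp key).resolve_left (pow_ne_zero _ h0)
    obtain ⟨i, hgi⟩ := hi u hg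
    apply hgi
    have hpdscale : ∀ k ∈ Icc (m + 1) (2 * m),
        eval z (pderiv i (b k)) = t 0 ^ (k - 1) * eval u (pderiv i (b k)) := by
      intro k hk
      rw [hzu]
      exact auxEvalSmul (auxPderivHomog (hb k hk) i) _ _
    have key2 : eval t (pderiv i.succ f)
        = t 0 ^ (2 * m - 1) * eval u (pderiv i (1 + ∑ k ∈ Icc (m + 1) (2 * m), b k)) := by
      rw [hpd i, map_add, pderiv_one, zero_add, map_sum, map_sum, Finset.mul_sum]
      refine Finset.sum_congr rfl fun k hk => ?_
      rw [hpdscale k hk]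
      rw [mem_Icc] at hk
      rw [← mul_assoc, ← pow_add]
      congr 2
      omega
    rw [hd i.succ] at key2
    exact (mul_eq_zero.mp key2.symm).resolve_left (pow_ne_zero _ h0)
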